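/- Let F: ℝⁿ ⇉ ℝⁿ have convex graph and let G be defined from F as G(u₁, u₂, u, u₃, u₄) = −u₁ − θ²u₂ + (2 + 2θ² − δ²/h)u − θ²u₃ + (δ²/h)u₄ − δ²F(u), with δ, σ, h > 0, θ = δ/σ. Let (u₁,u₂,u,u₃,u₄,v) ∈ gph G and set w = (2/δ² + 2/σ² − 1/h)u + (1/h)u₄ − (1/δ²)u₁ − (1/σ²)u₂ − (1/σ²)u₃ − (1/δ²)v ∈ F(u). Then (ū₁, ū₂, ū, ū₃, ū₄, v̄) ∈ cone(gph G − (u₁,u₂,u,u₃,u₄,v)) if and only if (ū, (2/δ² + 2/σ² − 1/h)ū + (1/h)ū₄ − (1/δ²)ū₁ − (1/σ²)ū₂ − (1/σ²)ū₃ − (1/δ²)v̄) ∈ cone(gph F − (u, w)). -/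

import Mathlib

open RealInnerProductSpace

def coneOf {X : Type*} [SMul ℝ X] (A : Set X) : Set X :=
  {z | ∃ μ : ℝ, 0 < μ ∧ ∃ a ∈ A, z = μ • a}

def Gset {n : ℕ} (δ σ h : ℝ) (F : EuclideanSpace ℝ (Fin n) → Set (EuclideanSpace ℝ (Fin n)))
    (u₁ u₂ u u₃ u₄ : EuclideanSpace ℝ (Fin n)) : Set (EuclideanSpace ℝ (Fin n)) :=
  (fun w => -u₁ - (δ / σ) ^ 2 • u₂ + (2 + 2 * (δ / σ) ^ 2 - δ ^ 2 / h) • u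
      - (δ / σ) ^ 2 • u₃ + (δ ^ 2 / h) • u₄ - δ ^ 2 • w) '' F u

set_option maxHeartbeats 1600000 in
/-- Equivalence of the cones of tangent directions of `gph G` and `gph F` (Theorem 4.1). -/
theorem stmt7 {n : ℕ} (δ σ h : ℝ) (hδ : 0 < δ) (hσ : 0 < σ) (hh : 0 < h)
    (F : EuclideanSpace ℝ (Fin n) → Set (EuclideanSpace ℝ (Fin n)))
    (hF : Convex ℝ {p : EuclideanSpace ℝ (Fin n) × EuclideanSpace ℝ (Fin n) | p.2 ∈ F p.1})
    (u₁ u₂ u u₃ u₄ v w : EuclideanSpace ℝ (Fin n))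
    (hv : v ∈ Gset δ σ h F u₁ u₂ u u₃ u₄)
    (hw : w = (2 / δ ^ 2 + 2 / σ ^ 2 - 1 / h) • u + (1 / h) • u₄ - (1 / δ ^ 2) • u₁
      - (1 / σ ^ 2) • u₂ - (1 / σ ^ 2) • u₃ - (1 / δ ^ 2) • v)
    (ub₁ ub₂ ub ub₃ ub₄ vb : EuclideanSpace ℝ (Fin n)) :
    (((ub₁, ub₂, ub, ub₃, ub₄), vb) ∈ coneOf
        ((fun p => p - ((u₁, u₂, u, u₃, u₄), v)) ''
          {p : (EuclideanSpace ℝ (Fin n) × EuclideanSpace ℝ (Fin n) ×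
              EuclideanSpace ℝ (Fin n) × EuclideanSpace ℝ (Fin n) ×
              EuclideanSpace ℝ (Fin n)) × EuclideanSpace ℝ (Fin n) |
            p.2 ∈ Gset δ σ h F p.1.1 p.1.2.1 p.1.2.2.1 p.1.2.2.2.1 p.1.2.2.2.2})) ↔
      ((ub, (2 / δ ^ 2 + 2 / σ ^ 2 - 1 / h) • ub + (1 / h) • ub₄ - (1 / δ ^ 2) • ub₁
          - (1 / σ ^ 2) • ub₂ - (1 / σ ^ 2) • ub₃ - (1 / δ ^ 2) • vb) ∈ coneOf
        ((fun p => p - (u, w)) ''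
          {p : EuclideanSpace ℝ (Fin n) × EuclideanSpace ℝ (Fin n) | p.2 ∈ F p.1})) := by
  obtain ⟨w', hw'F, hv'⟩ := hv
  have hδ' : (δ : ℝ) ≠ 0 := hδ.ne'
  have hσ' : (σ : ℝ) ≠ 0 := hσ.ne'
  have hh' : (h : ℝ) ≠ 0 := hh.ne'
  have hww : w = w' := by
    rw [hw, ← hv']
    match_scalars <;> field_simp <;> (try ring1) <;> (try exact Or.inr (by ring))
  have hvv : v = -u₁ - (δ / σ) ^ 2 • u₂ + (2 + 2 * (δ / σ) ^ 2 - δ ^ 2 / h) • u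
      - (δ / σ) ^ 2 • u₃ + (δ ^ 2 / h) • u₄ - δ ^ 2 • w := by rw [hww]; exact hv'.symm
  subst hww
  constructor
  · rintro ⟨μ, hμ, -, ⟨⟨⟨a₁, a₂, a, a₃, a₄⟩, b⟩, hb, rfl⟩, heq⟩
    obtain ⟨c, hc, hcb⟩ := hb
    dsimp only at hc hcb
    simp only [Prod.mk_sub_mk, Prod.smul_mk, Prod.mk.injEq] at heq
    obtain ⟨⟨h1, h2, h3, h4, h5⟩, h6⟩ := heq
    refine ⟨μ, hμ, (a, c) - (u, w), ⟨(a, c), hc, rfl⟩, ?_⟩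
    simp only [Prod.mk_sub_mk, Prod.smul_mk, Prod.mk.injEq]
    refine ⟨h3, ?_⟩
    rw [h1, h2, h3, h4, h5, h6, ← hcb, hvv]
    match_scalars <;> field_simp <;> (try ring1) <;> (try exact Or.inr (by ring))
  · rintro ⟨μ, hμ, -, ⟨⟨a, c⟩, hc, rfl⟩, heq⟩
    have hc' : c ∈ F a := hc
    have hμ' : (μ : ℝ) ≠ 0 := hμ.ne'
    simp only [Prod.mk_sub_mk, Prod.smul_mk, Prod.mk.injEq] at heq
    obtain ⟨h3, h6⟩ := heq
    have ha : a = u + μ⁻¹ • ub := by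
      rw [h3]; match_scalars <;> field_simp <;> ring
    have hcw : c = w + μ⁻¹ • ((2 / δ ^ 2 + 2 / σ ^ 2 - 1 / h) • ub + (1 / h) • ub₄
        - (1 / δ ^ 2) • ub₁ - (1 / σ ^ 2) • ub₂ - (1 / σ ^ 2) • ub₃ - (1 / δ ^ 2) • vb) := by
      rw [h6]; match_scalars <;> field_simp <;> ring
    refine ⟨μ, hμ,
      ((u₁ + μ⁻¹ • ub₁, u₂ + μ⁻¹ • ub₂, a, u₃ + μ⁻¹ • ub₃, u₄ + μ⁻¹ • ub₄),
        -(u₁ + μ⁻¹ • ub₁) - (δ / σ) ^ 2 • (u₂ + μ⁻¹ • ub₂)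
          + (2 + 2 * (δ / σ) ^ 2 - δ ^ 2 / h) • a - (δ / σ) ^ 2 • (u₃ + μ⁻¹ • ub₃)
          + (δ ^ 2 / h) • (u₄ + μ⁻¹ • ub₄) - δ ^ 2 • c) - ((u₁, u₂, u, u₃, u₄), v),
      ⟨_, ⟨c, hc', rfl⟩, rfl⟩, ?_⟩
    simp only [Prod.mk_sub_mk, Prod.smul_mk, Prod.mk.injEq]
    refine ⟨⟨?_, ?_, h3, ?_, ?_⟩, ?_⟩
    · match_scalars <;> field_simp <;> ring
    · match_scalars <;> field_simp <;> ring
    · match_scalars <;> field_simp <;> ring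
    · match_scalars <;> field_simp <;> ring
    · rw [ha, hcw, hvv]
      match_scalars <;> field_simp <;> (try ring1) <;> (try exact Or.inr (by ring))
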